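/- Let X be a real Banach space with the following property: for every Banach space Y, every closed subspace E ⊆ Y with dim(Y/E) = 1, and every bounded linear operator τ : E → X, there exists a bounded linear operator T : Y → X extending τ with ‖T‖ ≤ ‖τ‖. Then for every Banach space Y, every subset M ⊆ Y, every point p ∈ Y, and every Lipschitz map f : M → X, there exists a Lipschitz map F : M ∪ {p} → X extending f with Lipschitz constant Lip(F) ≤ Lip(f). -/

import Mathlib

open Set Metric

/-- Type synonym for `X × ℝ`, to carry a custom norm. -/
def Ysyn (X : Type) : Type := X × ℝ

set_option maxHeartbeats 2000000 in
theorem key_ball_lemma (X : Type) [NormedAddCommGroup X] [NormedSpace ℝ X] [CompleteSpace X]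
    (hX : ∀ (Y : Type) [NormedAddCommGroup Y] [NormedSpace ℝ Y] [CompleteSpace Y],
      ∀ (E : Subspace ℝ Y), IsClosed (E : Set Y) → Module.finrank ℝ (Y ⧸ E) = 1 →
        ∀ (τ : E →L[ℝ] X), ∃ T : Y →L[ℝ] X, (∀ e : E, T e = τ e) ∧ ‖T‖ ≤ ‖τ‖)
    (Y : Type) [NormedAddCommGroup Y] [NormedSpace ℝ Y]
    (M : Set Y) (p : Y) (f : Y → X) (hf : LipschitzOnWith 1 f M)
    (m₀ : Y) (hm₀ : m₀ ∈ M) (d : ℝ) (hd : 0 < d) (hdd : ∀ m ∈ M, d ≤ dist p m) :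
    ∃ x₀ : X, ∀ m ∈ M, dist x₀ (f m) ≤ dist p m := by
  classical
  have hrpos : ∀ m ∈ M, 0 < dist p m := fun m hm => lt_of_lt_of_le hd (hdd m hm)
  set r₀ : ℝ := dist p m₀ with hr₀def
  have hr₀pos : 0 < r₀ := hrpos m₀ hm₀
  set v : Y → X × ℝ := fun m => (dist p m)⁻¹ • ((f m, -1) : X × ℝ) with hv
  set S : Set (X × ℝ) :=
    {w | (∃ x : X, ‖x‖ ≤ 1 ∧ w = (x, 0)) ∨ ∃ m ∈ M, ∃ t : ℝ, |t| ≤ 1 ∧ w = t • v m} with hS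
  have hSbal : Balanced ℝ S := by
    intro a ha w hw
    obtain ⟨u, hu, rfl⟩ := hw
    rcases hu with ⟨x, hx, rfl⟩ | ⟨m, hm, t, ht, rfl⟩
    · refine Or.inl ⟨a • x, ?_, ?_⟩
      · rw [norm_smul]
        calc ‖a‖ * ‖x‖ ≤ 1 * 1 := by
              apply mul_le_mul ha hx (norm_nonneg _) zero_le_one
        _ = 1 := one_mul 1
      · show a • ((x, (0:ℝ)) : X × ℝ) = (a • x, 0)
        rw [Prod.smul_mk, smul_zero]
    · refine Or.inr ⟨m, hm, a * t, ?_, ?_⟩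
      · rw [abs_mul]
        calc |a| * |t| ≤ 1 * 1 := by
              apply mul_le_mul ha ht (abs_nonneg _) zero_le_one
        _ = 1 := one_mul 1
      · show a • (t • v m) = (a * t) • v m
        rw [smul_smul]
  set W : Set (X × ℝ) := convexHull ℝ S with hW
  have hSW : S ⊆ W := subset_convexHull ℝ S
  have hWconv : Convex ℝ W := convex_convexHull ℝ S
  have hWbal : Balanced ℝ W := hSbal.convexHull
  -- absorbency: a small ball is inside `W`
  have hWabs : Absorbent ℝ W := by
    set ε : ℝ := min ((2 * (1 + ‖f m₀‖))⁻¹) ((2 * r₀)⁻¹) with hε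
    have hεpos : 0 < ε := by
      apply lt_min <;> · apply inv_pos.mpr; positivity
    have hball : Metric.ball (0 : X × ℝ) ε ⊆ W := by
      rintro ⟨x, t⟩ hxt
      rw [mem_ball_zero_iff, Prod.norm_def] at hxt
      have hx : ‖x‖ < ε := lt_of_le_of_lt (le_max_left _ _) hxt
      have ht : |t| < ε := by
        have := lt_of_le_of_lt (le_max_right _ _) hxt
        simpa [Real.norm_eq_abs] using this
      have h1 : ((2 : ℝ) • (x + t • f m₀), (0:ℝ)) ∈ S := by
        refine Or.inl ⟨(2 : ℝ) • (x + t • f m₀), ?_, rfl⟩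
        rw [norm_smul]
        have hb1 : ‖x + t • f m₀‖ ≤ ‖x‖ + |t| * ‖f m₀‖ := by
          calc ‖x + t • f m₀‖ ≤ ‖x‖ + ‖t • f m₀‖ := norm_add_le _ _
          _ = ‖x‖ + |t| * ‖f m₀‖ := by rw [norm_smul, Real.norm_eq_abs]
        have hε1 : ε ≤ (2 * (1 + ‖f m₀‖))⁻¹ := min_le_left _ _
        have : ‖x‖ + |t| * ‖f m₀‖ ≤ ε * (1 + ‖f m₀‖) := by
          have h2 : |t| * ‖f m₀‖ ≤ ε * ‖f m₀‖ :=
            mul_le_mul_of_nonneg_right ht.le (norm_nonneg _)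
          nlinarith [hx.le]
        have : ‖x + t • f m₀‖ ≤ (2:ℝ)⁻¹ := by
          have h3 : ε * (1 + ‖f m₀‖) ≤ (2 * (1 + ‖f m₀‖))⁻¹ * (1 + ‖f m₀‖) :=
            mul_le_mul_of_nonneg_right hε1 (by positivity)
          have h4 : (2 * (1 + ‖f m₀‖))⁻¹ * (1 + ‖f m₀‖) = (2:ℝ)⁻¹ := by
            field_simp
          linarith [hb1, this]
        rw [Real.norm_ofNat]
        linarith
      have h2 : (-2 * t * r₀) • v m₀ ∈ S := by
        refine Or.inr ⟨m₀, hm₀, -2 * t * r₀, ?_, rfl⟩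
        have hε2 : ε ≤ (2 * r₀)⁻¹ := min_le_right _ _
        rw [abs_mul, abs_mul]
        have : |t| * r₀ ≤ (2 * r₀)⁻¹ * r₀ :=
          mul_le_mul_of_nonneg_right (ht.le.trans hε2) hr₀pos.le
        have h4 : (2 * r₀)⁻¹ * r₀ = (2:ℝ)⁻¹ := by field_simp
        rw [abs_neg, abs_two, abs_of_nonneg hr₀pos.le]
        nlinarith [abs_nonneg t]
      have hsum : ((x, t) : X × ℝ)
          = (2:ℝ)⁻¹ • (((2 : ℝ) • (x + t • f m₀), (0:ℝ)) : X × ℝ)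
            + (2:ℝ)⁻¹ • ((-2 * t * r₀) • v m₀) := by
        rw [hv]
        simp only [smul_smul]
        have : (2:ℝ)⁻¹ * (-2 * t * r₀ * (dist p m₀)⁻¹) = -t := by
          rw [← hr₀def]; field_simp
        rw [this]
        rw [Prod.smul_mk, Prod.smul_mk]
        ext
        · show x = (2:ℝ)⁻¹ • ((2:ℝ) • (x + t • f m₀)) + (-t) • f m₀
          rw [smul_smul]
          norm_num
        · show t = (2:ℝ)⁻¹ • (0:ℝ) + (-t) • (-1 : ℝ)
          simp
      rw [hsum]
      exact hWconv (hSW h1) (hSW h2) (by norm_num) (by norm_num) (by norm_num)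
    exact fun x => ((absorbent_ball_zero (𝕜 := ℝ) hεpos) x).mono_left hball
  set N : Seminorm ℝ (X × ℝ) := gaugeSeminorm hWbal hWconv hWabs with hNdef
  have hNgauge : ∀ w : X × ℝ, N w = gauge W w := fun w => rfl
  -- upper bounds
  have hU1 : ∀ x : X, N ((x, 0) : X × ℝ) ≤ ‖x‖ := by
    intro x
    rcases eq_or_ne x 0 with rfl | hx
    · have : ((0,0) : X × ℝ) = (0 : X × ℝ) := rfl
      rw [this, map_zero]
      exact norm_nonneg 0
    · rw [hNgauge]
      refine gauge_le_of_mem (norm_nonneg x) ?_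
      refine ⟨(‖x‖⁻¹ • x, 0), hSW (Or.inl ⟨‖x‖⁻¹ • x, ?_, rfl⟩), ?_⟩
      · rw [norm_smul, norm_inv, norm_norm, inv_mul_cancel₀ (norm_ne_zero_iff.mpr hx)]
      · show ‖x‖ • ((‖x‖⁻¹ • x, (0:ℝ)) : X × ℝ) = (x, 0)
        rw [Prod.smul_mk, smul_smul, mul_inv_cancel₀ (norm_ne_zero_iff.mpr hx), one_smul,
          smul_zero]
  have hU2 : ∀ m ∈ M, N ((f m, -1) : X × ℝ) ≤ dist p m := by
    intro m hm
    rw [hNgauge]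
    refine gauge_le_of_mem dist_nonneg ?_
    refine ⟨v m, hSW (Or.inr ⟨m, hm, 1, by norm_num, (one_smul ℝ (v m)).symm⟩), ?_⟩
    show dist p m • v m = _
    rw [hv]
    simp only [smul_smul]
    rw [mul_inv_cancel₀ (ne_of_gt (hrpos m hm)), one_smul]
  -- lower bound machinery
  have hgauge_ge : ∀ (φ : (X × ℝ) →ₗ[ℝ] ℝ), (∀ w ∈ S, φ w ≤ 1) → ∀ u : X × ℝ, φ u ≤ N u := by
    intro φ hφ u
    have hφW : ∀ w ∈ W, φ w ≤ 1 := fun w hw =>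
      convexHull_min hφ (convex_halfSpace_le (LinearMap.isLinear φ) 1) hw
    by_contra hlt
    push_neg at hlt
    rw [hNgauge] at hlt
    obtain ⟨b, hb0, hba, hmem⟩ := exists_lt_of_gauge_lt hWabs hlt
    obtain ⟨w, hw, rfl⟩ := hmem
    have : φ (b • w) = b * φ w := by rw [map_smul, smul_eq_mul]
    rw [this] at hba
    nlinarith [hφW w hw]
  -- lower bound on |t|
  have hL1 : ∀ w : X × ℝ, d * |w.2| ≤ N w := by
    have haux : ∀ s : ℝ, |s| ≤ d → ∀ w : X × ℝ, s * w.2 ≤ N w := by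
      intro s hs
      apply hgauge_ge (s • LinearMap.snd ℝ X ℝ)
      intro w hw
      rcases hw with ⟨x, hx, rfl⟩ | ⟨m, hm, t, ht, rfl⟩
      · show s * (0:ℝ) ≤ 1
        norm_num
      · show s * (t • v m).2 ≤ 1
        rw [hv]
        have h2 : ((t • ((dist p m)⁻¹ • ((f m, -1) : X × ℝ)))).2
            = t * ((dist p m)⁻¹ * (-1)) := rfl
        rw [h2]
        have hr := hrpos m hm
        have hb : |s * (t * ((dist p m)⁻¹ * (-1)))| = |s| * |t| * (dist p m)⁻¹ := by
          rw [abs_mul, abs_mul, abs_mul, abs_neg, abs_one, abs_inv,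
            abs_of_nonneg dist_nonneg]
          ring
        have h3 : |s| * |t| * (dist p m)⁻¹ ≤ 1 := by
          have h4 : |s| * |t| ≤ d := by
            calc |s| * |t| ≤ d * 1 := mul_le_mul hs ht (abs_nonneg _) hd.le
            _ = d := mul_one d
          calc |s| * |t| * (dist p m)⁻¹ ≤ d * (dist p m)⁻¹ :=
                mul_le_mul_of_nonneg_right h4 (by positivity)
          _ ≤ dist p m * (dist p m)⁻¹ :=
                mul_le_mul_of_nonneg_right (hdd m hm) (by positivity)
          _ = 1 := mul_inv_cancel₀ (ne_of_gt hr)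
        exact (le_abs_self _).trans (hb ▸ h3)
    intro w
    rcases le_or_gt 0 w.2 with h1 | h1
    · rw [abs_of_nonneg h1]
      exact haux d (by rw [abs_of_nonneg hd.le]) w
    · rw [abs_of_neg h1]
      have hneg := haux (-d) (by rw [abs_neg, abs_of_nonneg hd.le]) w
      calc d * -w.2 = -d * w.2 := by ring
      _ ≤ N w := hneg
  have hL2 : ∀ (g : X →L[ℝ] ℝ), ‖g‖ ≤ 1 →
      ∃ c : ℝ, (∀ m ∈ M, |g (f m) - c| ≤ dist p m) ∧
        (∀ w : X × ℝ, g w.1 + w.2 * c ≤ N w) := by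
    intro g hg
    have hglip : LipschitzWith 1 g := g.lipschitz.weaken (by exact_mod_cast hg)
    have hgf : LipschitzOnWith 1 (fun y => g (f y)) M := by
      have := hglip.comp_lipschitzOnWith hf
      simpa only [mul_one, Function.comp_def] using this
    obtain ⟨G, hGlip, hGeq⟩ := hgf.extend_real
    have hGb : ∀ m ∈ M, |G m - G p| ≤ dist p m := by
      intro m hm
      rw [← Real.dist_eq]
      calc dist (G m) (G p) ≤ 1 * dist m p := by
            have := hGlip.dist_le_mul m p
            simpa using this
      _ = dist p m := by rw [one_mul, dist_comm]
    refine ⟨G p, ?_, ?_⟩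
    · intro m hm
      have h1 : g (f m) = G m := hGeq hm
      rw [h1]
      exact hGb m hm
    · set φ : (X × ℝ) →ₗ[ℝ] ℝ :=
        ((g : X →ₗ[ℝ] ℝ).comp (LinearMap.fst ℝ X ℝ)) + (G p) • LinearMap.snd ℝ X ℝ with hφ
      have happ : ∀ w : X × ℝ, φ w = g w.1 + w.2 * G p := by
        intro w
        simp [hφ, mul_comm]
      intro w
      rw [← happ w]
      apply hgauge_ge φ _ w
      intro w' hw'
      rcases hw' with ⟨x, hx, rfl⟩ | ⟨m, hm, t, ht, rfl⟩
      · rw [happ]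
        show g x + (0:ℝ) * G p ≤ 1
        rw [zero_mul, add_zero]
        calc g x ≤ |g x| := le_abs_self _
        _ ≤ ‖g‖ * ‖x‖ := by rw [← Real.norm_eq_abs]; exact g.le_opNorm x
        _ ≤ 1 * 1 := mul_le_mul hg hx (norm_nonneg _) zero_le_one
        _ = 1 := one_mul 1
      · rw [happ]
        have h1 : (t • v m).1 = (t * (dist p m)⁻¹) • f m := by
          rw [hv]; simp [smul_smul]
        have h2 : (t • v m).2 = t * ((dist p m)⁻¹ * (-1)) := rfl
        rw [h1, h2, map_smul]
        have hgm : g (f m) = G m := hGeq hm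
        have hr := hrpos m hm
        have heq : (t * (dist p m)⁻¹) • g (f m) + (t * ((dist p m)⁻¹ * (-1))) * G p
            = t * (dist p m)⁻¹ * (G m - G p) := by
          rw [smul_eq_mul, hgm]; ring
        rw [heq]
        calc t * (dist p m)⁻¹ * (G m - G p) ≤ |t * (dist p m)⁻¹ * (G m - G p)| :=
              le_abs_self _
        _ = |t| * (dist p m)⁻¹ * |G m - G p| := by
              rw [abs_mul, abs_mul, abs_inv, abs_of_nonneg dist_nonneg]
        _ ≤ 1 * (dist p m)⁻¹ * dist p m := by
              have h3 : (0:ℝ) ≤ (dist p m)⁻¹ := by positivity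
              exact mul_le_mul (mul_le_mul_of_nonneg_right ht h3) (hGb m hm)
                (abs_nonneg _) (by positivity)
        _ = 1 := by rw [one_mul, inv_mul_cancel₀ (ne_of_gt hr)]
  have hN1 : ∀ x : X, ‖x‖ ≤ N ((x, 0) : X × ℝ) := by
    intro x
    rcases eq_or_ne x 0 with rfl | hx
    · rw [norm_zero]
      have h0 : ((0,0) : X × ℝ) = 0 := rfl
      rw [h0, map_zero]
    obtain ⟨g, hg1, hgx⟩ := exists_dual_vector ℝ x (norm_ne_zero_iff.mpr hx)
    obtain ⟨c, _, hb⟩ := hL2 g (le_of_eq hg1)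
    have := hb (x, 0)
    simp only [zero_mul, add_zero] at this
    have hgx' : g x = ‖x‖ := by exact_mod_cast hgx
    rw [← hgx']
    exact this
  have hN2 : ∀ (x : X) (t : ℝ), ‖x + t • f m₀‖ ≤ N ((x, t) : X × ℝ) + |t| * r₀ := by
    intro x t
    rcases eq_or_ne (x + t • f m₀) 0 with h0 | h0
    · rw [h0, norm_zero]
      have h1 := apply_nonneg N ((x,t) : X × ℝ)
      have h2 : (0:ℝ) ≤ |t| * r₀ := by positivity
      linarith
    obtain ⟨g, hg1, hgx⟩ := exists_dual_vector ℝ _ (norm_ne_zero_iff.mpr h0)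
    obtain ⟨c, hc, hb⟩ := hL2 g (le_of_eq hg1)
    have h1 := hb (x, t)
    have hgx' : g (x + t • f m₀) = ‖x + t • f m₀‖ := by exact_mod_cast hgx
    have h2 : g x + t * g (f m₀) = ‖x + t • f m₀‖ := by
      rw [← hgx', map_add, map_smul, smul_eq_mul]
    have h3 : |g (f m₀) - c| ≤ r₀ := hc m₀ hm₀
    have h4 : t * (g (f m₀) - c) ≤ |t| * r₀ := by
      calc t * (g (f m₀) - c) ≤ |t * (g (f m₀) - c)| := le_abs_self _
      _ = |t| * |g (f m₀) - c| := abs_mul _ _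
      _ ≤ |t| * r₀ := mul_le_mul_of_nonneg_left h3 (abs_nonneg _)
    have h5 : t * (g (f m₀) - c) = t * g (f m₀) - t * c := by ring
    linarith
  -- upper bound for N in terms of the product norm
  have hU3 : ∀ w : X × ℝ, N w ≤ ‖w.1‖ + |w.2| * (r₀ + ‖f m₀‖) := by
    intro w
    have hsplit : ((w.1 + w.2 • f m₀, 0) : X × ℝ) + (-w.2) • ((f m₀, -1) : X × ℝ) = w := by
      rw [Prod.smul_mk, Prod.mk_add_mk, Prod.ext_iff]
      constructor
      · show w.1 + w.2 • f m₀ + (-w.2) • f m₀ = w.1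
        rw [add_assoc, ← add_smul, add_neg_cancel, zero_smul, add_zero]
      · show (0:ℝ) + (-w.2) • (-1:ℝ) = w.2
        simp
    calc N w = N (((w.1 + w.2 • f m₀, 0) : X × ℝ) + (-w.2) • ((f m₀, -1) : X × ℝ)) := by
          rw [hsplit]
    _ ≤ N ((w.1 + w.2 • f m₀, 0) : X × ℝ) + N ((-w.2) • ((f m₀, -1) : X × ℝ)) :=
          map_add_le_add N _ _
    _ ≤ (‖w.1‖ + |w.2| * ‖f m₀‖) + |w.2| * r₀ := by
          have p1 : N ((w.1 + w.2 • f m₀, 0) : X × ℝ) ≤ ‖w.1‖ + |w.2| * ‖f m₀‖ := by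
            calc N ((w.1 + w.2 • f m₀, 0) : X × ℝ) ≤ ‖w.1 + w.2 • f m₀‖ := hU1 _
            _ ≤ ‖w.1‖ + ‖w.2 • f m₀‖ := norm_add_le _ _
            _ = ‖w.1‖ + |w.2| * ‖f m₀‖ := by rw [norm_smul, Real.norm_eq_abs]
          have p2 : N ((-w.2) • ((f m₀, -1) : X × ℝ)) ≤ |w.2| * r₀ := by
            rw [map_smul_eq_mul, Real.norm_eq_abs, abs_neg]
            exact mul_le_mul_of_nonneg_left (hU2 m₀ hm₀) (abs_nonneg _)
          exact add_le_add p1 p2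
    _ = ‖w.1‖ + |w.2| * (r₀ + ‖f m₀‖) := by ring
  -- lower bound for N: the first coordinate
  have hx1 : ∀ w : X × ℝ, ‖w.1‖ ≤ N w + |w.2| * (r₀ + ‖f m₀‖) := by
    intro w
    have e1 : w.1 = (w.1 + w.2 • f m₀) + (-(w.2 • f m₀)) := by
      rw [add_assoc, add_neg_cancel, add_zero]
    calc ‖w.1‖ = ‖(w.1 + w.2 • f m₀) + (-(w.2 • f m₀))‖ := by rw [← e1]
    _ ≤ ‖w.1 + w.2 • f m₀‖ + ‖(-(w.2 • f m₀))‖ := norm_add_le _ _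
    _ ≤ (N ((w.1, w.2) : X × ℝ) + |w.2| * r₀) + |w.2| * ‖f m₀‖ := by
          refine add_le_add (hN2 w.1 w.2) ?_
          rw [norm_neg, norm_smul, Real.norm_eq_abs]
    _ = N w + |w.2| * (r₀ + ‖f m₀‖) := by ring
  -- pass to the type synonym
  letI : AddCommGroup (Ysyn X) := inferInstanceAs (AddCommGroup (X × ℝ))
  letI : Module ℝ (Ysyn X) := inferInstanceAs (Module ℝ (X × ℝ))
  letI : NormedAddCommGroup (Ysyn X) := AddGroupNorm.toNormedAddCommGroup
    { toFun := fun w : Ysyn X => N w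
      map_zero' := map_zero N
      add_le' := fun a b => map_add_le_add N a b
      neg' := fun a => map_neg_eq_map N a
      eq_zero_of_map_eq_zero' := by
        intro w hw
        have hw' : N w = 0 := hw
        have hw2 : w.2 = 0 := by
          have h1 := hL1 w
          rw [hw'] at h1
          have h2 := abs_nonneg w.2
          have : |w.2| = 0 := by nlinarith
          exact abs_eq_zero.mp this
        have hw1 : w.1 = 0 := by
          have h1 := hN1 w.1
          have hweq : ((w.1, (0:ℝ)) : X × ℝ) = w := by
            rw [← hw2]
            exact rfl
          rw [hweq, hw'] at h1
          exact norm_eq_zero.mp (le_antisymm h1 (norm_nonneg _))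
        show w = 0
        refine Prod.ext_iff.mpr ?_
        exact ⟨hw1, hw2⟩ }
  have hnorm : ∀ w : Ysyn X, ‖w‖ = N w := fun _ => rfl
  letI : NormedSpace ℝ (Ysyn X) :=
    ⟨fun a w => by
      change N (a • w) ≤ ‖a‖ * N w
      exact (map_smul_eq_mul N a (show X × ℝ from w)).le⟩
  let J : Ysyn X →ₗ[ℝ] (X × ℝ) := LinearMap.id
  let J' : (X × ℝ) →ₗ[ℝ] Ysyn X := LinearMap.id
  set C₁ : ℝ := 1 + (1 + r₀ + ‖f m₀‖) / d with hC₁def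
  have hb1 : ∀ w : Ysyn X, ‖J w‖ ≤ C₁ * ‖w‖ := by
    intro w
    rw [Prod.norm_def, hnorm]
    have hNn := apply_nonneg N (J w)
    have h2 : |(J w).2| ≤ d⁻¹ * N (J w) := by
      rw [inv_mul_eq_div, le_div_iff₀ hd]
      linarith [hL1 (J w)]
    have h1 : ‖(J w).1‖ ≤ (1 + (r₀ + ‖f m₀‖) / d) * N (J w) := by
      have := hx1 (J w)
      have h3 : |(J w).2| * (r₀ + ‖f m₀‖) ≤ d⁻¹ * N (J w) * (r₀ + ‖f m₀‖) := by
        apply mul_le_mul_of_nonneg_right h2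
        positivity
      have h4 : d⁻¹ * N (J w) * (r₀ + ‖f m₀‖) = (r₀ + ‖f m₀‖) / d * N (J w) := by
        field_simp
      nlinarith
    apply max_le
    · have hC : (1 + (r₀ + ‖f m₀‖) / d) ≤ C₁ := by
        rw [hC₁def]
        have : (r₀ + ‖f m₀‖) / d ≤ (1 + r₀ + ‖f m₀‖) / d := by
          gcongr
          linarith
        linarith
      calc ‖(J w).1‖ ≤ (1 + (r₀ + ‖f m₀‖) / d) * N (J w) := h1
      _ ≤ C₁ * N (J w) := mul_le_mul_of_nonneg_right hC hNn
    · rw [Real.norm_eq_abs]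
      have hC : d⁻¹ ≤ C₁ := by
        rw [hC₁def]
        have h5 : (1:ℝ) / d ≤ (1 + r₀ + ‖f m₀‖) / d := by
          gcongr
          linarith [norm_nonneg (f m₀), hr₀pos]
        rw [inv_eq_one_div]
        linarith
      calc |(J w).2| ≤ d⁻¹ * N (J w) := h2
      _ ≤ C₁ * N (J w) := mul_le_mul_of_nonneg_right hC hNn
  set C₂ : ℝ := 1 + (r₀ + ‖f m₀‖) with hC₂def
  have hb2 : ∀ w : X × ℝ, ‖J' w‖ ≤ C₂ * ‖w‖ := by
    intro w
    have hJ : J' w = w := rfl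
    rw [hnorm, hJ, Prod.norm_def]
    have h1 := hU3 w
    have h2 : ‖w.1‖ ≤ max ‖w.1‖ ‖w.2‖ := le_max_left _ _
    have h3 : |w.2| ≤ max ‖w.1‖ ‖w.2‖ := by
      rw [← Real.norm_eq_abs]; exact le_max_right _ _
    have h4 : (0:ℝ) ≤ r₀ + ‖f m₀‖ := by positivity
    have h5 : |w.2| * (r₀ + ‖f m₀‖) ≤ (max ‖w.1‖ ‖w.2‖) * (r₀ + ‖f m₀‖) :=
      mul_le_mul_of_nonneg_right h3 h4
    rw [hC₂def]
    nlinarith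
  let e₁ : Ysyn X →L[ℝ] (X × ℝ) := J.mkContinuous C₁ hb1
  let e₂ : (X × ℝ) →L[ℝ] Ysyn X := J'.mkContinuous C₂ hb2
  letI : CompleteSpace (Ysyn X) := by
    apply Metric.complete_of_cauchySeq_tendsto
    intro u hu
    have h1 : CauchySeq (e₁ ∘ u) := e₁.uniformContinuous.comp_cauchySeq hu
    obtain ⟨l, hl⟩ := cauchySeq_tendsto_of_complete h1
    refine ⟨e₂ l, ?_⟩
    have h2 : Filter.Tendsto (fun n => e₂ ((e₁ ∘ u) n)) Filter.atTop (nhds (e₂ l)) :=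
      (e₂.continuous.tendsto l).comp hl
    have h3 : (fun n => e₂ ((e₁ ∘ u) n)) = u := rfl
    rwa [h3] at h2
  -- the hyperplane
  let π : Ysyn X →ₗ[ℝ] ℝ := LinearMap.snd ℝ X ℝ
  let E : Subspace ℝ (Ysyn X) := LinearMap.ker π
  have hEclosed : IsClosed (E : Set (Ysyn X)) := by
    have h1 : (E : Set (Ysyn X)) = (fun w : Ysyn X => (e₁ w).2) ⁻¹' {0} := rfl
    rw [h1]
    exact isClosed_singleton.preimage (continuous_snd.comp e₁.continuous)
  have hπsurj : Function.Surjective π := fun c => ⟨((0, c) : X × ℝ), rfl⟩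
  have hErank : Module.finrank ℝ ((Ysyn X) ⧸ E) = 1 := by
    have e := π.quotKerEquivOfSurjective hπsurj
    rw [e.finrank_eq]
    exact Module.finrank_self ℝ
  -- the operator
  let τℓ : E →ₗ[ℝ] X := (LinearMap.fst ℝ X ℝ).comp (J.comp E.subtype)
  have hτb : ∀ e : E, ‖τℓ e‖ ≤ 1 * ‖e‖ := by
    intro e
    rw [one_mul]
    have h2 : (J (e : Ysyn X)).2 = 0 := e.2
    have h1 : ‖τℓ e‖ = ‖(J (e : Ysyn X)).1‖ := rfl
    rw [h1]
    calc ‖(J (e : Ysyn X)).1‖ ≤ N (((J (e : Ysyn X)).1, 0) : X × ℝ) := hN1 _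
    _ = N (J (e : Ysyn X)) := by rw [← h2]
    _ = ‖e‖ := rfl
  let τ : E →L[ℝ] X := τℓ.mkContinuous 1 hτb
  obtain ⟨T, hTE, hTnorm⟩ := hX (Ysyn X) E hEclosed hErank τ
  have hτ1 : ‖τ‖ ≤ 1 := LinearMap.mkContinuous_norm_le _ zero_le_one _
  let z : Ysyn X := (((0 : X), (1:ℝ)) : X × ℝ)
  refine ⟨T z, ?_⟩
  intro m hm
  let wm : Ysyn X := ((f m, (-1:ℝ)) : X × ℝ)
  let w0 : Ysyn X := ((f m, (0:ℝ)) : X × ℝ)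
  have hmemE : w0 ∈ E := LinearMap.mem_ker.mpr rfl
  have hw : wm = ((⟨w0, hmemE⟩ : E) : Ysyn X) - z := by
    have h : ((f m, (-1:ℝ)) : X × ℝ) = ((f m, (0:ℝ)) : X × ℝ) - ((0 : X), (1:ℝ)) := by
      rw [Prod.mk_sub_mk]
      norm_num
    exact h
  have hTw : T wm = f m - T z := by
    rw [hw, map_sub, hTE ⟨w0, hmemE⟩]
    have : τ ⟨w0, hmemE⟩ = f m := rfl
    rw [this]
  have hwmnorm : ‖wm‖ = N ((f m, -1) : X × ℝ) := rfl
  have hnn : ‖T wm‖ ≤ N ((f m, -1) : X × ℝ) := by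
    calc ‖T wm‖ ≤ ‖T‖ * ‖wm‖ := T.le_opNorm _
    _ ≤ 1 * ‖wm‖ := mul_le_mul_of_nonneg_right (hTnorm.trans hτ1) (norm_nonneg _)
    _ = N ((f m, -1) : X × ℝ) := by rw [one_mul, hwmnorm]
  rw [dist_eq_norm]
  calc ‖T z - f m‖ = ‖f m - T z‖ := norm_sub_rev _ _
  _ = ‖T wm‖ := by rw [hTw]
  _ ≤ N ((f m, -1) : X × ℝ) := hnn
  _ ≤ dist p m := hU2 m hm


/-- If every bounded operator from a closed one-codimensional subspace of a Banach
space into `X` extends with equal norm to the whole space, then every Lipschitz map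
from a subset of a Banach space into `X` extends to one more point with the same
Lipschitz constant. -/
theorem lipschitz_one_point_extension_of_codim_one_operator_extension
    (X : Type) [NormedAddCommGroup X] [NormedSpace ℝ X] [CompleteSpace X]
    (hX : ∀ (Y : Type) [NormedAddCommGroup Y] [NormedSpace ℝ Y] [CompleteSpace Y],
      ∀ (E : Subspace ℝ Y), IsClosed (E : Set Y) → Module.finrank ℝ (Y ⧸ E) = 1 →
        ∀ (τ : E →L[ℝ] X), ∃ T : Y →L[ℝ] X, (∀ e : E, T e = τ e) ∧ ‖T‖ ≤ ‖τ‖) :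
    ∀ (Y : Type) [NormedAddCommGroup Y] [NormedSpace ℝ Y] [CompleteSpace Y],
      ∀ (M : Set Y) (p : Y) (f : M → X) (K : NNReal), LipschitzWith K f →
        ∃ F : ↥(insert p M : Set Y) → X, LipschitzWith K F ∧
          ∀ (y : Y) (hy : y ∈ M), F ⟨y, Set.mem_insert_of_mem p hy⟩ = f ⟨y, hy⟩ := by

  intro Y _ _ _ M p f K hf
  classical
  rcases Set.eq_empty_or_nonempty M with hM | ⟨m₀, hm₀⟩
  · refine ⟨fun _ => 0, (LipschitzWith.const 0).weaken (zero_le : (0:NNReal) ≤ K), ?_⟩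
    intro y hy
    rw [hM] at hy
    exact absurd hy (Set.notMem_empty y)
  · suffices h : ∃ x₀ : X, ∀ (m : Y) (hm : m ∈ M), dist x₀ (f ⟨m, hm⟩) ≤ K * dist p m by
      obtain ⟨x₀, hx₀⟩ := h
      refine ⟨fun z => if h : (z : Y) ∈ M then f ⟨(z : Y), h⟩ else x₀, ?_, ?_⟩
      · rw [lipschitzWith_iff_dist_le_mul]
        rintro ⟨a, ha⟩ ⟨b, hb⟩
        simp only
        rw [Subtype.dist_eq]
        by_cases haM : a ∈ M <;> by_cases hbM : b ∈ M
        · rw [dif_pos haM, dif_pos hbM]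
          have := hf.dist_le_mul ⟨a, haM⟩ ⟨b, hbM⟩
          rwa [Subtype.dist_eq] at this
        · have hbp : b = p := (Set.mem_insert_iff.mp hb).resolve_right hbM
          rw [dif_pos haM, dif_neg hbM, dist_comm]
          calc dist x₀ (f ⟨a, haM⟩) ≤ K * dist p a := hx₀ a haM
          _ = (K : ℝ) * dist a b := by rw [hbp, dist_comm]
        · have hap : a = p := (Set.mem_insert_iff.mp ha).resolve_right haM
          rw [dif_neg haM, dif_pos hbM]
          calc dist x₀ (f ⟨b, hbM⟩) ≤ K * dist p b := hx₀ b hbM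
          _ = (K : ℝ) * dist a b := by rw [hap]
        · have hap : a = p := (Set.mem_insert_iff.mp ha).resolve_right haM
          have hbp : b = p := (Set.mem_insert_iff.mp hb).resolve_right hbM
          rw [dif_neg haM, dif_neg hbM, dist_self]
          positivity
      · intro y hy
        simp only [dif_pos hy]
    rcases eq_or_ne K 0 with rfl | hK0
    · refine ⟨f ⟨m₀, hm₀⟩, fun m hm => ?_⟩
      have := hf.dist_le_mul ⟨m₀, hm₀⟩ ⟨m, hm⟩
      simp only [NNReal.coe_zero, zero_mul] at this ⊢
      exact this
    · have hKpos : (0:ℝ) < (K:ℝ) := by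
        exact_mod_cast pos_iff_ne_zero.mpr hK0
      set ftil : Y → X := fun y => if h : y ∈ M then f ⟨y, h⟩ else f ⟨m₀, hm₀⟩ with hftil
      have hftilM : ∀ (m : Y) (hm : m ∈ M), ftil m = f ⟨m, hm⟩ := fun m hm => dif_pos hm
      have hftillip : ∀ a ∈ M, ∀ b ∈ M, dist (ftil a) (ftil b) ≤ K * dist a b := by
        intro a ha b hb
        rw [hftilM a ha, hftilM b hb]
        have := hf.dist_le_mul ⟨a, ha⟩ ⟨b, hb⟩
        rwa [Subtype.dist_eq] at this
      by_cases hp : p ∈ closure M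
      · obtain ⟨mseq, hmem, hconv⟩ := mem_closure_iff_seq_limit.mp hp
        have hcauchy : CauchySeq (fun n => ftil (mseq n)) := by
          rw [Metric.cauchySeq_iff]
          intro ε hε
          obtain ⟨Nn, hNn⟩ := Metric.cauchySeq_iff.mp hconv.cauchySeq (ε / K) (by positivity)
          refine ⟨Nn, fun a ha b hb => ?_⟩
          calc dist (ftil (mseq a)) (ftil (mseq b)) ≤ K * dist (mseq a) (mseq b) :=
                hftillip _ (hmem a) _ (hmem b)
          _ < K * (ε / K) := mul_lt_mul_of_pos_left (hNn a ha b hb) hKpos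
          _ = ε := by field_simp
        obtain ⟨x₀, hx₀⟩ := cauchySeq_tendsto_of_complete hcauchy
        refine ⟨x₀, fun m hm => ?_⟩
        have h1 : Filter.Tendsto (fun n => dist (ftil (mseq n)) (f ⟨m, hm⟩)) Filter.atTop
            (nhds (dist x₀ (f ⟨m, hm⟩))) := hx₀.dist tendsto_const_nhds
        have h2 : Filter.Tendsto (fun n => (K:ℝ) * dist (mseq n) m) Filter.atTop
            (nhds ((K:ℝ) * dist p m)) :=
          (hconv.dist tendsto_const_nhds).const_mul (K:ℝ)
        have h3 : ∀ n, dist (ftil (mseq n)) (f ⟨m, hm⟩) ≤ (K:ℝ) * dist (mseq n) m := by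
          intro n
          have := hftillip _ (hmem n) _ hm
          rwa [hftilM m hm] at this
        exact le_of_tendsto_of_tendsto' h1 h2 h3
      · obtain ⟨d, hdpos, hdlt⟩ := EMetric.exists_real_pos_lt_infEdist_of_notMem_closure hp
        have hdd : ∀ m ∈ M, d ≤ dist p m := by
          intro m hm
          have h1 : EMetric.infEdist p M ≤ edist p m := EMetric.infEdist_le_edist_of_mem hm
          have h2 : ENNReal.ofReal d < edist p m := lt_of_lt_of_le hdlt h1
          rw [edist_dist] at h2
          exact ((ENNReal.ofReal_lt_ofReal_iff_of_nonneg hdpos.le).mp h2).le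
        set f' : Y → X := fun y => (K:ℝ)⁻¹ • ftil y with hf'
        have hf'lip : LipschitzOnWith 1 f' M := by
          rw [lipschitzOnWith_iff_dist_le_mul]
          intro a ha b hb
          rw [hf']
          simp only
          rw [dist_smul₀]
          calc ‖(K:ℝ)⁻¹‖ * dist (ftil a) (ftil b) ≤ (K:ℝ)⁻¹ * ((K:ℝ) * dist a b) := by
                rw [Real.norm_eq_abs, abs_of_nonneg (by positivity)]
                exact mul_le_mul_of_nonneg_left (hftillip a ha b hb) (by positivity)
          _ = dist a b := by field_simp
          _ = ((1 : NNReal) : ℝ) * dist a b := by rw [NNReal.coe_one, one_mul]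
        obtain ⟨x₀', hx₀'⟩ := key_ball_lemma X hX Y M p f' hf'lip m₀ hm₀ d hdpos hdd
        refine ⟨(K:ℝ) • x₀', fun m hm => ?_⟩
        have h1 : f ⟨m, hm⟩ = (K:ℝ) • f' m := by
          rw [hf']
          simp only
          rw [smul_smul, mul_inv_cancel₀ (ne_of_gt hKpos), one_smul, hftilM m hm]
        rw [h1, dist_smul₀, Real.norm_eq_abs, abs_of_nonneg hKpos.le]
        exact mul_le_mul_of_nonneg_left (hx₀' m hm) hKpos.le
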